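/- Let P be encoded by a hook code (h_1^{l_1},...,h_n^{l_n}) in a t × s box with h_n > 0, and let P̄ be encoded by ((h_1−1)^{l_1},...,(h_n−1)^{l_n}) in a t × (s−1) box. With κ computed by the formula κ = s + max{t+1-s, 0, τ_1,...,τ_n} (using (s,t)) and κ̄ computed analogously using (s−1, t), one has κ(P) = κ̄(P̄) if κ̄(P̄) ≥ s, and κ(P) = s if κ̄(P̄) = s−1. -/

import Mathlib

lemma myfold {ι : Type*} [Fintype ι] (hne : (Finset.univ : Finset ι).Nonempty)
    (b : ℤ) (f : ι → ℤ) :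
    Finset.fold max b f Finset.univ = max b (Finset.univ.sup' hne f) := by
  apply le_antisymm
  · rw [Finset.fold_max_le]
    exact ⟨le_max_left _ _, fun x _ =>
      le_trans (Finset.le_sup' f (Finset.mem_univ x)) (le_max_right _ _)⟩
  · exact max_le ((Finset.le_fold_max _).2 (Or.inl le_rfl))
      (Finset.sup'_le _ _ fun x _ => (Finset.le_fold_max _).2 (Or.inr ⟨x, Finset.mem_univ x, le_rfl⟩))


/-- `κ` computed from a hook code `(h_1^{l_1},…,h_n^{l_n})` in a `t × s` box:
`κ = s + max{t+1-s, 0, τ_1, …, τ_n}` where `τ_k = (l_k + ⋯ + l_n) - h_k`. -/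
def kappaCode (s t n : ℕ) (h l : Fin n → ℕ) : ℤ :=
  s + Finset.fold max (max ((t : ℤ) + 1 - s) 0)
    (fun k => (∑ i ∈ Finset.univ.filter (fun i => k ≤ i), (l i : ℤ)) - h k) Finset.univ

/-- If `P` has hook code `(h_1^{l_1},…,h_n^{l_n})` in a `t × s` box with `h_n > 0`, and `P̄`
has code `((h_1-1)^{l_1},…,(h_n-1)^{l_n})` in a `t × (s-1)` box, then `κ(P) = κ̄(P̄)` if
`κ̄(P̄) ≥ s`, and `κ(P) = s` if `κ̄(P̄) = s - 1`. -/
theorem kappa_lastPos_step (s t n : ℕ) (hn : 0 < n) (h l : Fin n → ℕ)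
    (hh : StrictAnti h) (hhs : ∀ k, h k ≤ s) (hl : ∀ k, 1 ≤ l k)
    (hsum : ∑ k, l k = t) (hlast : 0 < h ⟨n - 1, Nat.sub_lt hn Nat.one_pos⟩) :
    ((s : ℤ) ≤ kappaCode (s - 1) t n (fun k => h k - 1) l →
      kappaCode s t n h l = kappaCode (s - 1) t n (fun k => h k - 1) l) ∧
    (kappaCode (s - 1) t n (fun k => h k - 1) l = (s : ℤ) - 1 →
      kappaCode s t n h l = s) := by
  have hne : (Finset.univ : Finset (Fin n)).Nonempty := ⟨⟨0, hn⟩, Finset.mem_univ _⟩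
  have hpos : ∀ k, 0 < h k := fun k => by
    refine lt_of_lt_of_le hlast (hh.antitone ?_)
    have hk : (k : ℕ) ≤ n - 1 := by have := k.isLt; omega
    exact Fin.le_def.mpr (by simpa using hk)
  have hs1 : 1 ≤ s := le_trans (hpos ⟨0, hn⟩) (hhs _)
  have hcast : ∀ k : Fin n, ((h k - 1 : ℕ) : ℤ) = (h k : ℤ) - 1 := fun k => by
    have := hpos k; omega
  have hscast : ((s - 1 : ℕ) : ℤ) = (s : ℤ) - 1 := by omega
  set f : Fin n → ℤ :=
    fun k => (∑ i ∈ Finset.univ.filter (fun i => k ≤ i), (l i : ℤ)) - h k with hf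
  set A : ℤ := Finset.univ.sup' hne f with hA
  have hsup1 : Finset.univ.sup' hne (fun k => f k + 1) = A + 1 := by
    rw [hA]
    exact (Finset.comp_sup'_eq_sup'_comp (f := f) hne (fun x : ℤ => x + 1)
      (fun a b => (max_add_add_right a b 1).symm)).symm
  have h1 : kappaCode s t n h l = s + max (max ((t : ℤ) + 1 - s) 0) A := by
    rw [kappaCode, myfold hne]
  have h2 : kappaCode (s - 1) t n (fun k => h k - 1) l
      = (s : ℤ) - 1 + max (max ((t : ℤ) + 2 - s) 0) (A + 1) := by
    rw [kappaCode, myfold hne, hscast]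
    congr 2
    · ring_nf
    · rw [← hsup1]
      apply Finset.sup'_congr hne rfl
      intro k _
      rw [hcast k, hf]
      ring
  constructor
  · intro hge
    rw [h1, h2]; rw [h2] at hge
    rcases le_total ((t : ℤ) + 2 - s) 0 with hts | hts <;>
      rcases le_total A (-1) with hA1 | hA1 <;>
      rcases le_total ((t : ℤ) + 2 - s) (A + 1) with h3 | h3 <;>
      simp [max_def] at hge ⊢ <;> omega
  · intro heq
    rw [h1]; rw [h2] at heq
    rcases le_total ((t : ℤ) + 2 - s) 0 with hts | hts <;>
      rcases le_total A (-1) with hA1 | hA1 <;>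
      rcases le_total ((t : ℤ) + 2 - s) (A + 1) with h3 | h3 <;>
      simp [max_def] at heq ⊢ <;> omega
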